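/- arXiv:2206.01076 — 4 statements merged into one kernel-verified Lean document; each statement's English description precedes it below -/
import Mathlib

section
/- For δ > -1, the sequence p_i(δ) = (2+δ)·Γ(3+2δ)Γ(i+δ)/(Γ(1+δ)Γ(i+3+2δ)), i ≥ 1, sums to 1, i.e. ∑_{i=1}^∞ p_i(δ) = 1. -/
open Real Filter

/-- The limiting PA degree distribution sums to one. -/
theorem pa_pmf_sums_to_one (δ : ℝ) (hδ : -1 < δ) :
    ∑' i : ℕ, (2 + δ) * Gamma (3 + 2*δ) * Gamma (((i:ℝ) + 1) + δ) /
      (Gamma (1 + δ) * Gamma (((i:ℝ) + 1) + 3 + 2*δ)) = 1 := by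
  have h1δ : (0:ℝ) < 1 + δ := by linarith
  set b : ℕ → ℝ := fun n => Gamma ((n:ℝ) + 1 + δ) / Gamma ((n:ℝ) + 3 + 2*δ) with hb
  have hx : ∀ n : ℕ, (0:ℝ) < (n:ℝ) + 1 + δ := fun n => by
    have : (0:ℝ) ≤ (n:ℝ) := Nat.cast_nonneg n
    linarith
  have hy : ∀ n : ℕ, (0:ℝ) < (n:ℝ) + 3 + 2*δ := fun n => by
    have : (0:ℝ) ≤ (n:ℝ) := Nat.cast_nonneg n
    linarith
  have hGx : ∀ n : ℕ, 0 < Gamma ((n:ℝ) + 1 + δ) := fun n => Gamma_pos_of_pos (hx n)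
  have hGy : ∀ n : ℕ, 0 < Gamma ((n:ℝ) + 3 + 2*δ) := fun n => Gamma_pos_of_pos (hy n)
  -- key telescoping identity
  have key : ∀ n : ℕ, b n - b (n+1)
      = (2+δ) * Gamma ((n:ℝ) + 1 + δ) / Gamma ((n:ℝ) + 1 + 3 + 2*δ) := by
    intro n
    have e1 : ((n+1:ℕ):ℝ) + 1 + δ = ((n:ℝ) + 1 + δ) + 1 := by push_cast; ring
    have e2 : ((n+1:ℕ):ℝ) + 3 + 2*δ = ((n:ℝ) + 3 + 2*δ) + 1 := by push_cast; ring
    have e3 : (n:ℝ) + 1 + 3 + 2*δ = ((n:ℝ) + 3 + 2*δ) + 1 := by ring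
    show Gamma ((n:ℝ) + 1 + δ) / Gamma ((n:ℝ) + 3 + 2*δ)
        - Gamma (((n+1:ℕ):ℝ) + 1 + δ) / Gamma (((n+1:ℕ):ℝ) + 3 + 2*δ) = _
    rw [e1, e2, e3, Gamma_add_one (hx n).ne', Gamma_add_one (hy n).ne']
    have h1 := (hGx n).ne'
    have h2 := (hGy n).ne'
    have h3 := (hx n).ne'
    have h4 := (hy n).ne'
    rw [div_sub_div _ _ h2 (mul_ne_zero h4 h2), div_eq_div_iff (mul_ne_zero h2 (mul_ne_zero h4 h2)) (mul_ne_zero h4 h2)]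
    ring
  -- b n tends to 0
  have hb0 : Tendsto b atTop (nhds 0) := by
    have hub : ∀ᶠ n : ℕ in atTop, b n ≤ 1 / ((n:ℝ) + 1 + δ) := by
      filter_upwards [tendsto_natCast_atTop_atTop.eventually_ge_atTop (1 - δ)] with n hn
      have h2 : (2:ℝ) ≤ (n:ℝ) + 1 + δ := by linarith
      have hmono : Gamma ((n:ℝ) + 1 + δ + 1) ≤ Gamma ((n:ℝ) + 3 + 2*δ) := by
        rcases eq_or_lt_of_le (show (n:ℝ) + 1 + δ + 1 ≤ (n:ℝ) + 3 + 2*δ by linarith) with h | h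
        · rw [h]
        · exact le_of_lt (Gamma_strictMonoOn_Ici (by simp [Set.mem_Ici]; linarith)
            (by simp [Set.mem_Ici]; linarith) h)
      have hG1 : Gamma ((n:ℝ) + 1 + δ + 1) = ((n:ℝ) + 1 + δ) * Gamma ((n:ℝ) + 1 + δ) :=
        Gamma_add_one (hx n).ne'
      rw [hG1] at hmono
      have : b n ≤ Gamma ((n:ℝ) + 1 + δ) / (((n:ℝ) + 1 + δ) * Gamma ((n:ℝ) + 1 + δ)) :=
        div_le_div_of_nonneg_left (hGx n).le (mul_pos (hx n) (hGx n)) hmono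
      calc b n ≤ Gamma ((n:ℝ) + 1 + δ) / (((n:ℝ) + 1 + δ) * Gamma ((n:ℝ) + 1 + δ)) := this
        _ = 1 / ((n:ℝ) + 1 + δ) := by
            rw [mul_comm, ← div_div, div_self (hGx n).ne']
    have hlb : ∀ᶠ n : ℕ in atTop, 0 ≤ b n :=
      Eventually.of_forall fun n => (div_pos (hGx n) (hGy n)).le
    have hlim : Tendsto (fun n : ℕ => 1 / ((n:ℝ) + 1 + δ)) atTop (nhds 0) := by
      simp only [one_div]
      exact Tendsto.inv_tendsto_atTop
        (tendsto_atTop_add_const_right _ (1 + δ)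
          (tendsto_natCast_atTop_atTop) |>.congr (fun n => by ring))
    exact tendsto_of_tendsto_of_tendsto_of_le_of_le' tendsto_const_nhds hlim hlb hub
  -- HasSum of the telescoping differences
  have hdiff : HasSum (fun n : ℕ => b n - b (n+1)) (b 0) := by
    have hnn : ∀ n : ℕ, 0 ≤ b n - b (n+1) := by
      intro n
      rw [key n]
      have h4 : (0:ℝ) < Gamma ((n:ℝ) + 1 + 3 + 2*δ) := by
        apply Gamma_pos_of_pos
        have : (0:ℝ) ≤ (n:ℝ) := Nat.cast_nonneg n
        linarith
      exact (div_pos (mul_pos (by linarith : (0:ℝ) < 2 + δ) (hGx n)) h4).le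
    rw [hasSum_iff_tendsto_nat_of_nonneg hnn]
    have : ∀ n : ℕ, ∑ i ∈ Finset.range n, (b i - b (i+1)) = b 0 - b n := fun n =>
      Finset.sum_range_sub' b n
    simp only [this]
    simpa using tendsto_const_nhds.sub hb0
  -- multiply by the constant
  have hG1δ : (0:ℝ) < Gamma (1 + δ) := Gamma_pos_of_pos h1δ
  have hG3δ : (0:ℝ) < Gamma (3 + 2*δ) := Gamma_pos_of_pos (by linarith)
  have hmain : HasSum (fun n : ℕ => Gamma (3 + 2*δ) / Gamma (1 + δ) * (b n - b (n+1))) 1 := by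
    have := hdiff.mul_left (Gamma (3 + 2*δ) / Gamma (1 + δ))
    have hb0v : b 0 = Gamma (1 + δ) / Gamma (3 + 2*δ) := by
      simp [hb]
    rw [hb0v] at this
    convert this using 1
    · rfl
    rw [div_mul_div_comm, mul_comm (Gamma (3 + 2*δ)), div_self (mul_pos hG1δ hG3δ).ne']
  have hfinal : HasSum (fun i : ℕ => (2 + δ) * Gamma (3 + 2*δ) * Gamma (((i:ℝ) + 1) + δ) /
      (Gamma (1 + δ) * Gamma (((i:ℝ) + 1) + 3 + 2*δ))) 1 := by
    refine hmain.congr_fun fun n => ?_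
    rw [key n]
    have := (hGx n).ne'
    have h4 : (0:ℝ) < Gamma ((n:ℝ) + 1 + 3 + 2*δ) := by
      apply Gamma_pos_of_pos
      have : (0:ℝ) ≤ (n:ℝ) := Nat.cast_nonneg n
      linarith
    field_simp
  exact hfinal.tsum_eq
end

section
/- Let ξ_δ(·) be a linear birth-immigration process started at 1 with immigration parameter δ > -1, and let T be an exponential random variable with rate 2+δ, independent of ξ_δ. Then P(ξ_δ(T) = i) = (2+δ)·Γ(3+2δ)Γ(i+δ)/(Γ(1+δ)Γ(i+3+2δ)) for all i ≥ 1. -/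
open Real MeasureTheory

lemma exp_subst_aux (A : ℝ) (n : ℕ) :
    ∫ x in Set.Ioo (0:ℝ) 1, x ^ (A-1) * (1-x)^n
      = ∫ t in Set.Ioi (0:ℝ), exp (-A*t) * (1 - exp (-t))^n := by
  have himg : (fun t : ℝ => exp (-t)) '' Set.Ioi 0 = Set.Ioo 0 1 := by
    ext y
    constructor
    · rintro ⟨t, ht, rfl⟩
      exact ⟨exp_pos _, exp_lt_one_iff.mpr (by simpa using ht)⟩
    · rintro ⟨hy0, hy1⟩
      exact ⟨-Real.log y, by simpa using Real.log_neg hy0 hy1, by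
        simp [Real.exp_log hy0]⟩
  have hderiv : ∀ t ∈ Set.Ioi (0:ℝ),
      HasDerivWithinAt (fun t : ℝ => exp (-t)) (-exp (-t)) (Set.Ioi 0) t := by
    intro t _
    have : HasDerivAt (fun t : ℝ => exp (-t)) (exp (-t) * (-1)) t :=
      (Real.hasDerivAt_exp (-t)).comp t (hasDerivAt_neg t)
    simpa using this.hasDerivWithinAt
  have hinj : Set.InjOn (fun t : ℝ => exp (-t)) (Set.Ioi 0) :=
    fun a _ b _ h => by
      have := Real.exp_injective h
      linarith
  have := MeasureTheory.integral_image_eq_integral_abs_deriv_smul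
    (f := fun t : ℝ => exp (-t)) (f' := fun t : ℝ => -exp (-t))
    (g := fun x : ℝ => x ^ (A-1) * (1-x)^n)
    measurableSet_Ioi hderiv hinj
  rw [himg] at this
  rw [this]
  refine setIntegral_congr_fun measurableSet_Ioi fun t _ => ?_
  have h1 : |-exp (-t)| = exp (-t) := by
    rw [abs_neg, abs_of_pos (exp_pos _)]
  have h2 : exp (-t) ^ (A-1) = exp (-t * (A-1)) := by
    rw [Real.rpow_def_of_pos (exp_pos _), Real.log_exp]
  have h3 : exp (-t) * exp (-t * (A-1)) = exp (-A * t) := by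
    rw [← Real.exp_add]; congr 1; ring
  simp only [smul_eq_mul, h1, h2]
  rw [← h3]; ring

lemma real_beta_aux (A : ℝ) (hA : 0 < A) (n : ℕ) :
    ∫ x in Set.Ioo (0:ℝ) 1, x ^ (A-1) * (1-x)^n
      = Gamma A * Gamma (n+1) / Gamma (A + (n+1)) := by
  have hbeta : Complex.betaIntegral (A : ℂ) ((n : ℂ)+1)
      = ((∫ x in Set.Ioo (0:ℝ) 1, x ^ (A-1) * (1-x)^n : ℝ) : ℂ) := by
    rw [Complex.betaIntegral, intervalIntegral.integral_of_le zero_le_one,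
      MeasureTheory.integral_Ioc_eq_integral_Ioo]
    have hcongr : ∫ x in Set.Ioo (0:ℝ) 1, (x:ℂ) ^ ((A:ℂ)-1) * (1-(x:ℂ)) ^ ((n:ℂ)+1-1)
        = ∫ x in Set.Ioo (0:ℝ) 1, ((x ^ (A-1) * (1-x)^n : ℝ) : ℂ) := by
      refine setIntegral_congr_fun measurableSet_Ioo fun x hx => ?_
      have hx0 : (0:ℝ) ≤ x := hx.1.le
      rw [Complex.ofReal_mul, Complex.ofReal_cpow hx0, Complex.ofReal_pow]
      have : ((n:ℂ) + 1 - 1) = (n : ℂ) := by ring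
      rw [this, Complex.cpow_natCast]
      push_cast
      ring
    rw [hcongr]
    exact integral_ofReal
  have hs : 0 < ((A:ℂ)).re := by simpa using hA
  have ht : 0 < ((n:ℂ)+1).re := by
    simp only [Complex.add_re, Complex.natCast_re, Complex.one_re]
    positivity
  have hmul := Complex.Gamma_mul_Gamma_eq_betaIntegral hs ht
  rw [hbeta] at hmul
  have hG1 : Complex.Gamma (A : ℂ) = (Gamma A : ℂ) := Complex.Gamma_ofReal A
  have hG2 : Complex.Gamma ((n:ℂ)+1) = (Gamma ((n:ℝ)+1) : ℂ) := by
    rw [show ((n:ℂ)+1) = (((n:ℝ)+1 : ℝ) : ℂ) by push_cast; ring, Complex.Gamma_ofReal]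
  have hG3 : Complex.Gamma ((A:ℂ)+((n:ℂ)+1)) = (Gamma (A+((n:ℝ)+1)) : ℂ) := by
    rw [show ((A:ℂ)+((n:ℂ)+1)) = ((A+((n:ℝ)+1) : ℝ) : ℂ) by push_cast; ring,
      Complex.Gamma_ofReal]
  rw [hG1, hG2, hG3, ← Complex.ofReal_mul, ← Complex.ofReal_mul] at hmul
  have hreal := Complex.ofReal_inj.mp hmul
  have hGpos : 0 < Gamma (A + ((n:ℝ)+1)) := Real.Gamma_pos_of_pos (by positivity)
  field_simp
  linarith [hreal]

/-- Mixing the pmf of a birth-immigration process started at 1 over an independent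
exponential time with rate `2+δ` gives the limiting PA degree distribution. -/
theorem birth_immigration_exp_mixture (δ : ℝ) (hδ : -1 < δ) (i : ℕ) (hi : 1 ≤ i) :
    (∫ t in Set.Ioi (0:ℝ), (2+δ) * exp (-(2+δ)*t) *
        (Gamma ((i:ℝ) + δ) / (Gamma (i:ℝ) * Gamma (1+δ)) *
          exp (-(1+δ)*t) * (1 - exp (-t))^(i-1)))
      = (2+δ) * Gamma (3+2*δ) * Gamma ((i:ℝ)+δ) /
          (Gamma (1+δ) * Gamma ((i:ℝ)+3+2*δ)) := by
  set K : ℝ := Gamma ((i:ℝ) + δ) / (Gamma (i:ℝ) * Gamma (1+δ)) with hK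
  have hi1 : (1:ℝ) ≤ (i:ℝ) := by exact_mod_cast hi
  have hni : ((i-1 : ℕ) : ℝ) + 1 = (i:ℝ) := by
    have := Nat.succ_pred_eq_of_pos hi
    exact_mod_cast congrArg (Nat.cast : ℕ → ℝ) this
  have hA : (0:ℝ) < 3+2*δ := by linarith
  have hstep : (∫ t in Set.Ioi (0:ℝ), (2+δ) * exp (-(2+δ)*t) *
        (K * exp (-(1+δ)*t) * (1 - exp (-t))^(i-1)))
      = ((2+δ) * K) * ∫ t in Set.Ioi (0:ℝ),
          exp (-(3+2*δ)*t) * (1 - exp (-t))^(i-1) := by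
    rw [← MeasureTheory.integral_const_mul]
    refine setIntegral_congr_fun measurableSet_Ioi fun t _ => ?_
    have he : exp (-(2+δ)*t) * exp (-(1+δ)*t) = exp (-(3+2*δ)*t) := by
      rw [← Real.exp_add]; congr 1; ring
    rw [← he]; ring
  rw [hstep, ← exp_subst_aux (3+2*δ) (i-1), real_beta_aux (3+2*δ) hA (i-1), hni]
  have h3 : (3+2*δ) + (i:ℝ) = (i:ℝ)+3+2*δ := by ring
  rw [h3]
  have hGi : 0 < Gamma (i:ℝ) := Real.Gamma_pos_of_pos (by linarith)
  have hG1δ : 0 < Gamma (1+δ) := Real.Gamma_pos_of_pos (by linarith)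
  have hGbig : 0 < Gamma ((i:ℝ)+3+2*δ) := Real.Gamma_pos_of_pos (by linarith)
  rw [hK]
  field_simp [hK]
end

section
/- Let ξ^j_δ(t) be a linear birth-immigration process with immigration parameter δ ≥ 0 started at j ≥ 1. For all integers i > j and all t ≥ 0, P(ξ^{j+1}_δ(t) > i) = P(ξ^j_δ(t) > i) + ((i+δ)/(j+δ))·P(ξ^j_δ(t) = i). -/
open Real MeasureTheory

/-- Pmf of a linear birth-immigration process `ξ^j_δ(t)` started at `j`. -/
noncomputable def birthPMF (δ : ℝ) (j i : ℕ) (t : ℝ) : ℝ :=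
  Gamma ((i:ℝ) + δ) / (Gamma ((i:ℝ) - (j:ℝ) + 1) * Gamma ((j:ℝ) + δ)) *
    exp (-((j:ℝ) + δ) * t) * (1 - exp (-t))^(i - j)

/-- Tail of a linear birth-immigration process `ξ^j_δ(t)` started at `j`. -/
noncomputable def birthTail (δ : ℝ) (j i : ℕ) (t : ℝ) : ℝ :=
  Gamma ((i:ℝ) + 1 + δ) / (Gamma ((i:ℝ) - (j:ℝ) + 1) * Gamma ((j:ℝ) + δ)) *
    ∫ x in (0:ℝ)..(1 - exp (-t)), x^(i - j) * (1 - x) ^ ((j:ℝ) - 1 + δ)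

/-- Integration by parts for `x^n (1-x)^s` on `[0,u]`. -/
lemma parts_aux (n : ℕ) (s u : ℝ) (hs : 1 ≤ s) (hu0 : 0 ≤ u) (hu1 : u < 1) :
    ((n:ℝ)+1) * ∫ x in (0:ℝ)..u, x^n * (1-x)^s
      = u^(n+1) * (1-u)^s + s * ∫ x in (0:ℝ)..u, x^(n+1) * (1-x)^(s-1) := by
  have hIcc : Set.uIcc (0:ℝ) u = Set.Icc 0 u := Set.uIcc_of_le hu0
  have hne : ∀ x ∈ Set.uIcc (0:ℝ) u, (1 - x) ≠ 0 := by
    intro x hx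
    rw [hIcc] at hx
    have := hx.2
    nlinarith [hx.1]
  have hcont1 : ContinuousOn (fun x : ℝ => x^n * (1-x)^s) (Set.uIcc 0 u) := by
    apply ContinuousOn.mul (continuousOn_pow n)
    exact ContinuousOn.rpow_const (by fun_prop) (fun x hx => Or.inl (hne x hx))
  have hcont2 : ContinuousOn (fun x : ℝ => x^(n+1) * (1-x)^(s-1)) (Set.uIcc 0 u) := by
    apply ContinuousOn.mul (continuousOn_pow (n+1))
    exact ContinuousOn.rpow_const (by fun_prop) (fun x hx => Or.inl (hne x hx))
  have hint1 : IntervalIntegrable (fun x : ℝ => x^n * (1-x)^s) volume 0 u :=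
    hcont1.intervalIntegrable
  have hint2 : IntervalIntegrable (fun x : ℝ => x^(n+1) * (1-x)^(s-1)) volume 0 u :=
    hcont2.intervalIntegrable
  have hderiv : ∀ x ∈ Set.uIcc (0:ℝ) u,
      HasDerivAt (fun y : ℝ => y^(n+1) * (1-y)^s)
        (((n:ℝ)+1) * (x^n * (1-x)^s) - s * (x^(n+1) * (1-x)^(s-1))) x := by
    intro x hx
    have h1 : HasDerivAt (fun y : ℝ => y^(n+1)) (((n:ℝ)+1) * x^n) x := by
      simpa using hasDerivAt_pow (n+1) x
    have h2 : HasDerivAt (fun y : ℝ => (1-y)^s) (s * (1-x)^(s-1) * (-1)) x := by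
      exact (Real.hasDerivAt_rpow_const (Or.inr hs)).comp x
        ((hasDerivAt_id x).const_sub 1)
    have := h1.fun_mul h2
    refine this.congr_deriv ?_
    ring
  have H := intervalIntegral.integral_eq_sub_of_hasDerivAt hderiv
    ((hint1.const_mul ((n:ℝ)+1)).sub (hint2.const_mul s))
  rw [intervalIntegral.integral_sub (hint1.const_mul _) (hint2.const_mul _),
    intervalIntegral.integral_const_mul, intervalIntegral.integral_const_mul] at H
  simp only [ne_eq, pow_succ] at H ⊢
  have h0 : (0:ℝ)^(n+1) * (1-(0:ℝ))^s = 0 := by simp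
  nlinarith [H]

/-- `P(ξ^{j+1}_δ(t) > i) = P(ξ^j_δ(t) > i) + ((i+δ)/(j+δ))·P(ξ^j_δ(t) = i)`. -/
theorem birth_tail_recursion (δ : ℝ) (hδ : 0 ≤ δ) (j i : ℕ) (hj : 1 ≤ j)
    (hij : j < i) (t : ℝ) (ht : 0 ≤ t) :
    birthTail δ (j+1) i t
      = birthTail δ j i t + (((i:ℝ) + δ) / ((j:ℝ) + δ)) * birthPMF δ j i t := by
  obtain ⟨n, rfl⟩ : ∃ n, i = j + 1 + n := ⟨i - (j+1), by omega⟩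
  set u : ℝ := 1 - exp (-t) with hu
  have hu0 : 0 ≤ u := by simp [hu, exp_le_one_iff]; linarith
  have hu1 : u < 1 := by simp [hu]; positivity
  set s : ℝ := (j:ℝ) + δ with hs
  have hs1 : 1 ≤ s := by
    have : (1:ℝ) ≤ (j:ℝ) := by exact_mod_cast hj
    simp [hs]; linarith
  have hs0 : 0 < s := lt_of_lt_of_le one_pos hs1
  have key := parts_aux n s u hs1 hu0 hu1
  have e1 : j + 1 + n - (j + 1) = n := by omega
  have e2 : j + 1 + n - j = n + 1 := by omega
  have hexp : exp (-((j:ℝ) + δ) * t) = (1 - u)^s := by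
    have : (1:ℝ) - u = exp (-t) := by simp [hu]
    rw [this, ← Real.exp_log (exp_pos (-t)) ]
    rw [Real.exp_log (exp_pos _), Real.rpow_def_of_pos (exp_pos _), Real.log_exp]
    rw [hs]; ring_nf
  have hGij : Gamma (((j:ℝ)+1+n) - (j:ℝ) + 1) = ((n:ℝ)+1) * Gamma ((n:ℝ)+1) := by
    have : ((j:ℝ)+1+n) - (j:ℝ) + 1 = ((n:ℝ)+1) + 1 := by ring
    rw [this, Real.Gamma_add_one (by positivity)]
  have hGj1 : Gamma ((j:ℝ)+1+δ) = s * Gamma s := by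
    have : (j:ℝ)+1+δ = s + 1 := by rw [hs]; ring
    rw [this, Real.Gamma_add_one (ne_of_gt hs0)]
  have hGi1 : Gamma (((j:ℝ)+1+(n:ℝ)) + 1 + δ) = (((j:ℝ)+1+(n:ℝ)) + δ) * Gamma (((j:ℝ)+1+(n:ℝ)) + δ) := by
    have h : ((j:ℝ)+1+(n:ℝ)) + 1 + δ = (((j:ℝ)+1+(n:ℝ)) + δ) + 1 := by ring
    rw [h, Real.Gamma_add_one (by positivity)]
  have hBpos : 0 < Gamma ((n:ℝ)+1) := Real.Gamma_pos_of_pos (by positivity)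
  have hCpos : 0 < Gamma s := Real.Gamma_pos_of_pos hs0
  have hGipos : 0 < Gamma (((j:ℝ)+1+(n:ℝ)) + δ) := Real.Gamma_pos_of_pos (by positivity)
  unfold birthTail birthPMF
  rw [e1, e2]
  push_cast
  have ex1 : (j:ℝ) + 1 - 1 + δ = s := by rw [hs]; ring
  have ex2 : (j:ℝ) - 1 + δ = s - 1 := by rw [hs]; ring
  have ex3 : (j:ℝ)+1+(n:ℝ) - ((j:ℝ)+1) + 1 = (n:ℝ)+1 := by ring
  rw [ex1, ex2, ex3, hexp, hGj1, hGi1, hGij, ← hs]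
  set I1 : ℝ := ∫ x in (0:ℝ)..u, x^n * (1-x)^s with hI1
  set I2 : ℝ := ∫ x in (0:ℝ)..u, x^(n+1) * (1-x)^(s-1) with hI2
  rw [← hu]
  field_simp
  linear_combination key
end

section
/- Define U(λ; δ) = ∑_{i=1}^∞ p_{>i}(δ)/(i+λ) − 1/(2+λ) for λ, δ > -1, where p_{>i}(δ) = Γ(3+2δ)Γ(i+1+δ)/(Γ(1+δ)Γ(i+3+2δ)). Then U(λ; δ) has a unique zero at λ = δ: it is strictly positive for λ < δ and strictly negative for λ > δ. -/
open Real

/-- Limiting PA degree tail `p_{>i}(δ)`. -/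
noncomputable def pGt (δ : ℝ) (i : ℕ) : ℝ :=
  Gamma (3+2*δ) * Gamma ((i:ℝ)+1+δ) / (Gamma (1+δ) * Gamma ((i:ℝ)+3+2*δ))

/-- Limit of the normalized score function of the PA(δ) likelihood. -/
noncomputable def Uscore (lam δ : ℝ) : ℝ :=
  (∑' i : ℕ, pGt δ (i+1) / (((i:ℝ) + 1) + lam)) - 1/(2+lam)

namespace ScoreAux

/-- Product form of `pGt`. -/
noncomputable def fprod (δ : ℝ) (n : ℕ) : ℝ :=
  ∏ k ∈ Finset.range n, (((k:ℝ)+1+δ)/((k:ℝ)+3+2*δ))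

/-- Tail `∑_{j>n} pGt δ j` in product form. -/
noncomputable def Ttail (δ : ℝ) (n : ℕ) : ℝ :=
  ∏ k ∈ Finset.range n, (((k:ℝ)+2+δ)/((k:ℝ)+3+2*δ))

variable {δ lam : ℝ}

lemma posA (hδ : -1 < δ) (k : ℕ) : 0 < (k:ℝ)+1+δ := by
  have : (0:ℝ) ≤ (k:ℝ) := Nat.cast_nonneg k
  linarith

lemma posB (hδ : -1 < δ) (k : ℕ) : 0 < (k:ℝ)+2+δ := by
  have : (0:ℝ) ≤ (k:ℝ) := Nat.cast_nonneg k
  linarith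

lemma posC (hδ : -1 < δ) (k : ℕ) : 0 < (k:ℝ)+3+2*δ := by
  have : (0:ℝ) ≤ (k:ℝ) := Nat.cast_nonneg k
  linarith

lemma fprod_pos (hδ : -1 < δ) (n : ℕ) : 0 < fprod δ n :=
  Finset.prod_pos fun k _ => div_pos (posA hδ k) (posC hδ k)

lemma Ttail_pos (hδ : -1 < δ) (n : ℕ) : 0 < Ttail δ n :=
  Finset.prod_pos fun k _ => div_pos (posB hδ k) (posC hδ k)

lemma Ttail_le_one (hδ : -1 < δ) (n : ℕ) : Ttail δ n ≤ 1 :=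
  Finset.prod_le_one (fun k _ => (div_pos (posB hδ k) (posC hδ k)).le)
    (fun k _ => by
      rw [div_le_one (posC hδ k)]; linarith)

lemma fprod_succ (n : ℕ) :
    fprod δ (n+1) = fprod δ n * (((n:ℝ)+1+δ)/((n:ℝ)+3+2*δ)) :=
  Finset.prod_range_succ _ _

lemma Ttail_succ (n : ℕ) :
    Ttail δ (n+1) = Ttail δ n * (((n:ℝ)+2+δ)/((n:ℝ)+3+2*δ)) :=
  Finset.prod_range_succ _ _

/-- `pGt` equals the explicit product. -/
lemma pGt_eq (hδ : -1 < δ) : ∀ i, pGt δ i = fprod δ i := by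
  intro i
  induction i with
  | zero =>
      have h1 : 0 < Gamma (1+δ) := Gamma_pos_of_pos (by linarith)
      have h3 : 0 < Gamma (3+2*δ) := Gamma_pos_of_pos (by linarith)
      simp only [pGt, fprod, Finset.range_zero, Finset.prod_empty, Nat.cast_zero]
      rw [show (0:ℝ)+1+δ = 1+δ by ring, show (0:ℝ)+3+2*δ = 3+2*δ by ring]
      field_simp
  | succ n ih =>
      have h1 : 0 < Gamma (1+δ) := Gamma_pos_of_pos (by linarith)
      have h3 : 0 < Gamma (3+2*δ) := Gamma_pos_of_pos (by linarith)
      have hA : 0 < (n:ℝ)+1+δ := posA hδ n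
      have hC : 0 < (n:ℝ)+3+2*δ := posC hδ n
      have hGA : 0 < Gamma ((n:ℝ)+1+δ) := Gamma_pos_of_pos hA
      have hGC : 0 < Gamma ((n:ℝ)+3+2*δ) := Gamma_pos_of_pos hC
      have e1 : Gamma (((n+1:ℕ):ℝ)+1+δ) = ((n:ℝ)+1+δ) * Gamma ((n:ℝ)+1+δ) := by
        rw [show (((n+1:ℕ):ℝ)+1+δ) = ((n:ℝ)+1+δ)+1 by push_cast; ring]
        exact Gamma_add_one hA.ne'
      have e2 : Gamma (((n+1:ℕ):ℝ)+3+2*δ) = ((n:ℝ)+3+2*δ) * Gamma ((n:ℝ)+3+2*δ) := by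
        rw [show (((n+1:ℕ):ℝ)+3+2*δ) = ((n:ℝ)+3+2*δ)+1 by push_cast; ring]
        exact Gamma_add_one hC.ne'
      rw [fprod_succ, ← ih]
      simp only [pGt, e1, e2]
      field_simp

/-- Key telescoping relation. -/
lemma fprod_eq_Ttail_mul (hδ : -1 < δ) :
    ∀ n, fprod δ (n+1) = Ttail δ n * ((1+δ)/((n:ℝ)+3+2*δ)) := by
  intro n
  induction n with
  | zero =>
      rw [show (0+1 : ℕ) = 1 from rfl, fprod, Ttail, Finset.prod_range_one,
        Finset.range_zero, Finset.prod_empty]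
      norm_num
  | succ n ih =>
      have hC : ((n:ℝ)+3+2*δ) ≠ 0 := (posC hδ n).ne'
      have hC' : (((n+1:ℕ):ℝ)+3+2*δ) ≠ 0 := (posC hδ (n+1)).ne'
      rw [fprod_succ, ih, Ttail_succ]
      push_cast at hC' ⊢
      field_simp
      ring

lemma fprod_eq_sub (hδ : -1 < δ) (n : ℕ) :
    fprod δ (n+1) = Ttail δ n - Ttail δ (n+1) := by
  rw [fprod_eq_Ttail_mul hδ, Ttail_succ]
  have hC : ((n:ℝ)+3+2*δ) ≠ 0 := (posC hδ n).ne'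
  rw [eq_sub_iff_add_eq, ← mul_add, ← add_div,
    show (1+δ) + ((n:ℝ)+2+δ) = (n:ℝ)+3+2*δ by ring, div_self hC, mul_one]

/-- Partial sums of `fprod δ (i+1)`. -/
lemma sum_f (hδ : -1 < δ) (n : ℕ) :
    ∑ i ∈ Finset.range n, fprod δ (i+1) = 1 - Ttail δ n := by
  induction n with
  | zero => simp [Ttail]
  | succ n ih =>
      rw [Finset.sum_range_succ, ih, fprod_eq_sub hδ]
      ring

/-- Partial sums of the score series at `lam = δ`. -/
lemma sum_fdiv (hδ : -1 < δ) (n : ℕ) :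
    ∑ i ∈ Finset.range n, fprod δ (i+1)/((i:ℝ)+1+δ) = (1 - fprod δ n)/(2+δ) := by
  induction n with
  | zero => simp [fprod]
  | succ n ih =>
      have hA : ((n:ℝ)+1+δ) ≠ 0 := (posA hδ n).ne'
      have hC : ((n:ℝ)+3+2*δ) ≠ 0 := (posC hδ n).ne'
      have h2 : (2+δ) ≠ 0 := by linarith
      rw [Finset.sum_range_succ, ih, fprod_succ]
      field_simp
      ring

lemma fprod_le (hδ : -1 < δ) (n : ℕ) : fprod δ n ≤ 1/((n:ℝ)+1) := by
  have base : ∀ m : ℕ, (∏ k ∈ Finset.range m, (((k:ℝ)+1)/((k:ℝ)+2))) = 1/((m:ℝ)+1) := by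
    intro m
    induction m with
    | zero => simp
    | succ m ihm =>
        have : ((m:ℝ)+1) ≠ 0 := by positivity
        have : ((m:ℝ)+2) ≠ 0 := by positivity
        rw [Finset.prod_range_succ, ihm]
        push_cast
        field_simp
        ring
  rw [← base n]
  apply Finset.prod_le_prod
  · exact fun k _ => (div_pos (posA hδ k) (posC hδ k)).le
  · intro k _
    have hk : (0:ℝ) ≤ (k:ℝ) := Nat.cast_nonneg k
    rw [div_le_div_iff₀ (posC hδ k) (by positivity)]
    nlinarith

lemma tendsto_fprod (hδ : -1 < δ) :
    Filter.Tendsto (fun n => fprod δ n) Filter.atTop (nhds 0) := by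
  apply squeeze_zero (fun n => (fprod_pos hδ n).le) (fprod_le hδ)
  exact tendsto_one_div_add_atTop_nhds_zero_nat

/-- The score series at `lam = δ` sums to `1/(2+δ)`. -/
lemma hasSum_self (hδ : -1 < δ) :
    HasSum (fun i : ℕ => fprod δ (i+1)/((i:ℝ)+1+δ)) (1/(2+δ)) := by
  rw [hasSum_iff_tendsto_nat_of_nonneg
    (fun i => (div_pos (fprod_pos hδ (i+1)) (posA hδ i)).le)]
  simp only [sum_fdiv hδ]
  have : Filter.Tendsto (fun n => (1 - fprod δ n)/(2+δ)) Filter.atTop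
      (nhds ((1 - 0)/(2+δ))) :=
    (Filter.Tendsto.const_sub 1 (tendsto_fprod hδ)).div_const _
  simpa using this

lemma summable_f (hδ : -1 < δ) : Summable (fun i : ℕ => fprod δ (i+1)) := by
  apply summable_of_sum_range_le (c := 1) (fun i => (fprod_pos hδ (i+1)).le)
  intro n
  rw [sum_f hδ]
  have := Ttail_pos hδ n
  linarith

lemma summable_fdiv (hl : -1 < lam) (hδ : -1 < δ) :
    Summable (fun i : ℕ => fprod δ (i+1)/((i:ℝ)+1+lam)) := by
  have hg : Summable (fun i : ℕ => fprod δ (i+1) * (1/(1+lam))) :=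
    (summable_f hδ).mul_right _
  have hle : ∀ i : ℕ, fprod δ (i+1)/((i:ℝ)+1+lam) ≤ fprod δ (i+1) * (1/(1+lam)) := by
    intro i
    rw [div_eq_mul_one_div]
    apply mul_le_mul_of_nonneg_left _ (fprod_pos hδ (i+1)).le
    apply one_div_le_one_div_of_le (by linarith)
    have : (0:ℝ) ≤ (i:ℝ) := Nat.cast_nonneg i
    linarith
  exact Summable.of_nonneg_of_le
    (fun i => (div_pos (fprod_pos hδ (i+1)) (posA hl i)).le) hle hg

/-- Abel-summed term. -/
noncomputable def aTerm (lam δ : ℝ) (i : ℕ) : ℝ :=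
  (Ttail lam (i+1) - Ttail δ (i+1)) * (1/((i:ℝ)+1+lam) - 1/((i:ℝ)+2+lam))

lemma weight_sub_pos (hl : -1 < lam) (i : ℕ) :
    0 < 1/((i:ℝ)+1+lam) - 1/((i:ℝ)+2+lam) := by
  have h1 := posA hl i
  have h2 := posB hl i
  rw [sub_pos]
  apply one_div_lt_one_div_of_lt h1 (by linarith)

lemma summable_weight (hl : -1 < lam) :
    Summable (fun i : ℕ => 1/((i:ℝ)+1+lam) - 1/((i:ℝ)+2+lam)) := by
  apply summable_of_sum_range_le (c := 1/(1+lam))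
    (fun i => (weight_sub_pos hl i).le)
  intro n
  have key : ∑ i ∈ Finset.range n, (1/((i:ℝ)+1+lam) - 1/((i:ℝ)+2+lam))
      = 1/(0+1+lam) - 1/((n:ℝ)+1+lam) := by
    induction n with
    | zero => simp
    | succ n ih =>
        rw [Finset.sum_range_succ, ih]
        push_cast
        ring
  rw [key]
  have h1 := posA hl n
  have h2 : (0:ℝ) < 1/((n:ℝ)+1+lam) := by positivity
  norm_num
  linarith [(one_div_pos.mpr h1)]

lemma summable_aTerm (hl : -1 < lam) (hδ : -1 < δ) : Summable (aTerm lam δ) := by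
  apply Summable.of_norm_bounded ((summable_weight hl).mul_left 2)
  intro i
  rw [aTerm, norm_mul]
  have hw := weight_sub_pos hl i
  have hD : ‖Ttail lam (i+1) - Ttail δ (i+1)‖ ≤ 2 := by
    rw [Real.norm_eq_abs, abs_le]
    constructor
    · have := Ttail_pos hl (i+1); have := Ttail_le_one hδ (i+1); linarith
    · have := Ttail_le_one hl (i+1); have := Ttail_pos hδ (i+1); linarith
  calc ‖Ttail lam (i+1) - Ttail δ (i+1)‖ * ‖1/((i:ℝ)+1+lam) - 1/((i:ℝ)+2+lam)‖
      ≤ 2 * ‖1/((i:ℝ)+1+lam) - 1/((i:ℝ)+2+lam)‖ :=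
        mul_le_mul_of_nonneg_right hD (norm_nonneg _)
    _ = 2 * (1/((i:ℝ)+1+lam) - 1/((i:ℝ)+2+lam)) := by
        rw [Real.norm_eq_abs, abs_of_pos hw]

/-- Abel summation: `Uscore` equals the sum of `aTerm`s. -/
lemma uscore_eq (hl : -1 < lam) (hδ : -1 < δ) :
    Uscore lam δ = ∑' i, aTerm lam δ i := by
  -- d-terms
  set d : ℕ → ℝ := fun i =>
    fprod δ (i+1)/((i:ℝ)+1+lam) - fprod lam (i+1)/((i:ℝ)+1+lam) with hd_def
  have hsd : Summable d := (summable_fdiv hl hδ).sub (summable_fdiv hl hl)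
  have hU : Uscore lam δ = ∑' i, d i := by
    have h1 : (∑' i : ℕ, pGt δ (i+1) / (((i:ℝ) + 1) + lam))
        = ∑' i : ℕ, fprod δ (i+1)/((i:ℝ)+1+lam) :=
      tsum_congr fun i => by rw [pGt_eq hδ]
    rw [Uscore, h1, ← (hasSum_self hl).tsum_eq,
      ← Summable.tsum_sub (summable_fdiv hl hδ) (summable_fdiv hl hl)]
  -- Abel identity for partial sums
  have abel : ∀ n, ∑ i ∈ Finset.range n, aTerm lam δ i
      = (∑ i ∈ Finset.range n, d i)
        - (Ttail lam n - Ttail δ n) * (1/((n:ℝ)+1+lam)) := by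
    intro n
    induction n with
    | zero => simp [Ttail]
    | succ n ih =>
        rw [Finset.sum_range_succ, Finset.sum_range_succ, ih]
        have hdn : d n = ((Ttail lam (n+1) - Ttail δ (n+1))
            - (Ttail lam n - Ttail δ n)) * (1/((n:ℝ)+1+lam)) := by
          rw [hd_def]
          simp only
          rw [fprod_eq_sub hδ, fprod_eq_sub hl]
          ring
        rw [hdn, aTerm]
        push_cast
        ring
  -- limit of boundary term
  have hw0 : Filter.Tendsto (fun n : ℕ => 1/((n:ℝ)+1+lam)) Filter.atTop (nhds 0) := by
    simp only [one_div]
    apply Filter.Tendsto.inv_tendsto_atTop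
    have h := Filter.tendsto_atTop_add_const_right Filter.atTop (1+lam)
      tendsto_natCast_atTop_atTop
    exact h.congr (fun n => by ring)
  have hbd : Filter.Tendsto
      (fun n : ℕ => (Ttail lam n - Ttail δ n) * (1/((n:ℝ)+1+lam)))
      Filter.atTop (nhds 0) := by
    have hb := Filter.Tendsto.const_mul (2:ℝ) hw0
    rw [mul_zero] at hb
    apply squeeze_zero_norm _ hb
    intro n
    rw [norm_mul]
    have h1 := posA hl n
    have hwpos : (0:ℝ) < 1/((n:ℝ)+1+lam) := by positivity
    have hD : ‖Ttail lam n - Ttail δ n‖ ≤ 2 := by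
      rw [Real.norm_eq_abs, abs_le]
      constructor
      · have := Ttail_pos hl n; have := Ttail_le_one hδ n; linarith
      · have := Ttail_le_one hl n; have := Ttail_pos hδ n; linarith
    calc ‖Ttail lam n - Ttail δ n‖ * ‖1/((n:ℝ)+1+lam)‖
        ≤ 2 * ‖1/((n:ℝ)+1+lam)‖ := mul_le_mul_of_nonneg_right hD (norm_nonneg _)
      _ = 2 * (1/((n:ℝ)+1+lam)) := by rw [Real.norm_eq_abs, abs_of_pos hwpos]
  -- partial sums of aTerm tend to ∑' d
  have hpa : Filter.Tendsto (fun n => ∑ i ∈ Finset.range n, aTerm lam δ i)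
      Filter.atTop (nhds (∑' i, d i)) := by
    have := (hsd.hasSum.tendsto_sum_nat).sub hbd
    rw [sub_zero] at this
    apply this.congr
    intro n
    rw [abel n]
  have hsa := summable_aTerm hl hδ
  have := hsa.hasSum.tendsto_sum_nat
  rw [hU, tendsto_nhds_unique this hpa]

/-- Strict monotonicity of the tail in `δ`. -/
lemma Ttail_lt (hl : -1 < lam) (h : lam < δ) (n : ℕ) :
    Ttail δ (n+1) < Ttail lam (n+1) := by
  have hδ : -1 < δ := lt_trans hl h
  apply Finset.prod_lt_prod
    (f := fun k : ℕ => (((k:ℝ)+2+δ)/((k:ℝ)+3+2*δ)))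
    (g := fun k : ℕ => (((k:ℝ)+2+lam)/((k:ℝ)+3+2*lam)))
  · exact fun k _ => div_pos (posB hδ k) (posC hδ k)
  · intro k _
    rw [div_le_div_iff₀ (posC hδ k) (posC hl k)]
    have hk : (0:ℝ) ≤ (k:ℝ) := Nat.cast_nonneg k
    nlinarith
  · refine ⟨0, Finset.mem_range.mpr (Nat.succ_pos n), ?_⟩
    rw [div_lt_div_iff₀ (posC hδ 0) (posC hl 0)]
    have hk : ((0:ℕ):ℝ) = 0 := Nat.cast_zero
    rw [hk]
    nlinarith

lemma aTerm_pos (hl : -1 < lam) (h : lam < δ) (i : ℕ) : 0 < aTerm lam δ i :=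
  mul_pos (sub_pos.mpr (Ttail_lt hl h i)) (weight_sub_pos hl i)

end ScoreAux

open ScoreAux in
/-- `U(·; δ)` has a unique zero at `δ`: positive before, negative after. -/
theorem score_limit_unique_zero (lam δ : ℝ) (hl : -1 < lam) (hδ : -1 < δ) :
    (lam < δ → 0 < Uscore lam δ) ∧ (δ < lam → Uscore lam δ < 0) ∧ Uscore δ δ = 0 := by
  refine ⟨?_, ?_, ?_⟩
  · intro h
    rw [uscore_eq hl hδ]
    exact Summable.tsum_pos (summable_aTerm hl hδ) (fun i => (aTerm_pos hl h i).le) 0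
      (aTerm_pos hl h 0)
  · intro h
    rw [uscore_eq hl hδ]
    have hneg : ∀ i, aTerm lam δ i < 0 := by
      intro i
      have h1 : 0 < -aTerm lam δ i := by
        rw [aTerm, neg_mul_eq_neg_mul, neg_sub]
        exact mul_pos (sub_pos.mpr (Ttail_lt hδ h i)) (weight_sub_pos hl i)
      linarith
    have hpos : 0 < ∑' i, -aTerm lam δ i :=
      Summable.tsum_pos (summable_aTerm hl hδ).neg (fun i => by linarith [hneg i]) 0
        (by linarith [hneg 0])
    rw [tsum_neg] at hpos
    linarith
  · rw [Uscore]
    have h1 : (∑' i : ℕ, pGt δ (i+1) / (((i:ℝ) + 1) + δ))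
        = ∑' i : ℕ, fprod δ (i+1) / ((i:ℝ) + 1 + δ) :=
      tsum_congr fun i => by rw [pGt_eq hδ]
    rw [h1, (hasSum_self hδ).tsum_eq]
    ring
end
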